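/- Let ℓ ≥ 1 and let A be the ℓ×ℓ real matrix given by A_{i,i+1} = A_{i+1,i} = 1 for 1 ≤ i ≤ ℓ−1, A_{ℓ,ℓ} = 1, and all other entries 0 (the adjacency matrix of the tadpole graph T_ℓ). Then the eigenvalues of A are exactly the ℓ distinct real numbers 2 cos(m π/(2ℓ+1)) for odd m with 1 ≤ m ≤ 2ℓ−1; in particular all eigenvalues of A are simple. -/

import Mathlib

open scoped Real
open Real

namespace TadpoleAux

def cheb (x : ℝ) : ℕ → ℝ
  | 0 => 1
  | 1 => x
  | n + 2 => x * cheb x (n + 1) - cheb x n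

lemma cheb_two_step (x : ℝ) (n : ℕ) : cheb x (n + 2) = x * cheb x (n + 1) - cheb x n := rfl

lemma cheb_cos (θ : ℝ) : ∀ n : ℕ, cheb (2 * cos θ) n * sin θ = sin ((n + 1) * θ)
  | 0 => by simp [cheb]
  | 1 => by
      show (2 * cos θ) * sin θ = _
      push_cast
      rw [show ((1:ℝ) + 1) * θ = 2 * θ by ring, sin_two_mul]
      ring
  | n + 2 => by
      have h1 := cheb_cos θ (n + 1)
      have h0 := cheb_cos θ n
      push_cast at h1 h0 ⊢
      rw [cheb_two_step]
      rw [show ((n:ℝ) + 2 + 1) * θ = ((n:ℝ) + 1 + 1) * θ + θ by ring, sin_add]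
      rw [show ((n:ℝ) + 1) * θ = ((n:ℝ) + 1 + 1) * θ - θ by ring, sin_sub] at h0
      linear_combination (2 * cos θ) * h1 - h0

lemma cheb_mono {x : ℝ} (hx : 2 ≤ x) : ∀ n : ℕ, 1 ≤ cheb x n ∧ 1 ≤ cheb x (n + 1) - cheb x n
  | 0 => by constructor <;> simp [cheb] <;> linarith
  | n + 1 => by
      obtain ⟨h1, h2⟩ := cheb_mono hx n
      refine ⟨by linarith, ?_⟩
      rw [cheb_two_step]
      nlinarith [mul_nonneg (by linarith : (0:ℝ) ≤ x - 2) (by linarith : (0:ℝ) ≤ cheb x (n+1))]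

lemma cheb_neg (x : ℝ) : ∀ n : ℕ, cheb (-x) n = (-1) ^ n * cheb x n
  | 0 => by simp [cheb]
  | 1 => by simp [cheb]
  | n + 2 => by
      rw [cheb_two_step, cheb_two_step, cheb_neg x (n + 1), cheb_neg x n]
      ring

lemma cheb_gap_ne {ℓ : ℕ} (hℓ : 1 ≤ ℓ) {μ : ℝ} (hμ : 2 ≤ |μ|) :
    cheb μ ℓ - cheb μ (ℓ - 1) ≠ 0 := by
  have hE : ℓ - 1 + 1 = ℓ := by omega
  rcases le_abs.mp hμ with h | h
  · have hg := (cheb_mono h (ℓ - 1)).2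
    rw [hE] at hg
    intro h0; linarith
  · have e1 : cheb μ ℓ = (-1) ^ ℓ * cheb (-μ) ℓ := by rw [← cheb_neg, neg_neg]
    have e2 : cheb μ (ℓ - 1) = (-1) ^ (ℓ - 1) * cheb (-μ) (ℓ - 1) := by
      rw [← cheb_neg, neg_neg]
    have s : ((-1 : ℝ)) ^ (ℓ - 1) = -(-1) ^ ℓ := by
      have hp : (-1 : ℝ) ^ (ℓ - 1) * (-1) = (-1) ^ ℓ := by rw [← pow_succ, hE]
      linarith
    have a1 := (cheb_mono h ℓ).1
    have a2 := (cheb_mono h (ℓ - 1)).1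
    rw [e1, e2, s]
    intro h0
    have h0' : (-1 : ℝ) ^ ℓ * (cheb (-μ) ℓ + cheb (-μ) (ℓ - 1)) = 0 := by
      linear_combination h0
    rcases mul_eq_zero.mp h0' with hz | hz
    · exact pow_ne_zero _ (by norm_num : (-1:ℝ) ≠ 0) hz
    · linarith

/-- Extension of a vector on `Fin ℓ` to `ℕ` by zero. -/
def ext (ℓ : ℕ) (v : Fin ℓ → ℝ) (k : ℕ) : ℝ := if h : k < ℓ then v ⟨k, h⟩ else 0

lemma ext_lt {ℓ : ℕ} (v : Fin ℓ → ℝ) {k : ℕ} (h : k < ℓ) : ext ℓ v k = v ⟨k, h⟩ :=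
  dif_pos h

lemma sum_pick {n : ℕ} (v : Fin n → ℝ) (k : ℕ) :
    (∑ j : Fin n, if k = (j : ℕ) then v j else 0) = ext n v k := by
  unfold ext
  by_cases h : k < n
  · rw [dif_pos h]
    rw [Finset.sum_eq_single_of_mem (⟨k, h⟩ : Fin n) (Finset.mem_univ _)]
    · simp
    · intro j _ hj
      rw [if_neg]
      intro hk
      exact hj (Fin.ext hk.symm)
  · rw [dif_neg h]
    apply Finset.sum_eq_zero
    intro j _
    rw [if_neg]
    have := j.2
    omega

lemma mulVec_eq {ℓ : ℕ} (hℓ : 1 ≤ ℓ) (A : Matrix (Fin ℓ) (Fin ℓ) ℝ)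
    (hA : ∀ i j : Fin ℓ, A i j =
      if ((i : ℕ) + 1 = (j : ℕ) ∨ (j : ℕ) + 1 = (i : ℕ) ∨
          ((i : ℕ) = ℓ - 1 ∧ (j : ℕ) = ℓ - 1)) then 1 else 0)
    (v : Fin ℓ → ℝ) (i : Fin ℓ) :
    A.mulVec v i = ext ℓ v ((i : ℕ) + 1)
      + (if 0 < (i : ℕ) then ext ℓ v ((i : ℕ) - 1) else 0)
      + (if (i : ℕ) = ℓ - 1 then ext ℓ v (ℓ - 1) else 0) := by
  have key : ∀ j : Fin ℓ, A i j * v j =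
      (if (i : ℕ) + 1 = (j : ℕ) then v j else 0)
      + (if (j : ℕ) + 1 = (i : ℕ) then v j else 0)
      + (if ((i : ℕ) = ℓ - 1 ∧ (j : ℕ) = ℓ - 1) then v j else 0) := by
    intro j
    have hj := j.2
    have hi := i.2
    rw [hA]
    by_cases h1 : (i : ℕ) + 1 = (j : ℕ)
    · have h2 : ¬((j : ℕ) + 1 = (i : ℕ)) := by omega
      have h3 : ¬((i : ℕ) = ℓ - 1 ∧ (j : ℕ) = ℓ - 1) := by omega
      simp [h1, h2, h3]
    · by_cases h2 : (j : ℕ) + 1 = (i : ℕ)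
      · have h3 : ¬((i : ℕ) = ℓ - 1 ∧ (j : ℕ) = ℓ - 1) := by omega
        simp [h1, h2, h3]
      · by_cases h3 : ((i : ℕ) = ℓ - 1 ∧ (j : ℕ) = ℓ - 1) <;> simp [h1, h2, h3]
  show (∑ j, A i j * v j) = _
  rw [Finset.sum_congr rfl fun j _ => key j, Finset.sum_add_distrib,
    Finset.sum_add_distrib]
  congr 1
  · congr 1
    · exact sum_pick v ((i : ℕ) + 1)
    · by_cases h : 0 < (i : ℕ)
      · rw [if_pos h]
        refine (Finset.sum_congr rfl fun j _ => ?_).trans (sum_pick v ((i : ℕ) - 1))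
        exact if_congr (by omega) rfl rfl
      · rw [if_neg h]
        apply Finset.sum_eq_zero
        intro j _
        rw [if_neg]
        omega
  · by_cases h : (i : ℕ) = ℓ - 1
    · rw [if_pos h]
      refine (Finset.sum_congr rfl fun j _ => ?_).trans (sum_pick v (ℓ - 1))
      exact if_congr (by omega) rfl rfl
    · rw [if_neg h]
      apply Finset.sum_eq_zero
      intro j _
      rw [if_neg]
      omega

section Rows

variable {ℓ : ℕ} (hℓ : 1 ≤ ℓ) (A : Matrix (Fin ℓ) (Fin ℓ) ℝ)
  (hA : ∀ i j : Fin ℓ, A i j =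
    if ((i : ℕ) + 1 = (j : ℕ) ∨ (j : ℕ) + 1 = (i : ℕ) ∨
        ((i : ℕ) = ℓ - 1 ∧ (j : ℕ) = ℓ - 1)) then 1 else 0)
  {μ : ℝ} {v : Fin ℓ → ℝ}

include hℓ hA

lemma row (hv : A.mulVec v = μ • v) (i : Fin ℓ) :
    ext ℓ v ((i : ℕ) + 1)
      + (if 0 < (i : ℕ) then ext ℓ v ((i : ℕ) - 1) else 0)
      + (if (i : ℕ) = ℓ - 1 then ext ℓ v (ℓ - 1) else 0) = μ * ext ℓ v (i : ℕ) := by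
  have h := congrFun hv i
  rw [mulVec_eq hℓ A hA v i] at h
  rw [h]
  simp only [Pi.smul_apply, smul_eq_mul, ext_lt v i.2, Fin.eta]

lemma entries (hv : A.mulVec v = μ • v) :
    ∀ k, k < ℓ → ext ℓ v k = cheb μ k * ext ℓ v 0 := by
  intro k
  induction k using Nat.strong_induction_on with
  | _ k ih =>
    match k with
    | 0 => intro _; simp [cheb]
    | 1 =>
      intro hk
      have hr := row hℓ A hA hv ⟨0, by omega⟩
      simp only [Fin.val_mk] at hr
      rw [if_neg (lt_irrefl 0), if_neg (by omega)] at hr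
      show ext ℓ v 1 = cheb μ 1 * ext ℓ v 0
      show ext ℓ v 1 = μ * ext ℓ v 0
      linarith
    | k + 2 =>
      intro hk
      have h1 := ih (k + 1) (by omega) (by omega)
      have h0 := ih k (by omega) (by omega)
      have hr := row hℓ A hA hv ⟨k + 1, by omega⟩
      simp only [Fin.val_mk, Nat.add_sub_cancel] at hr
      rw [if_pos (Nat.succ_pos k), if_neg (by omega)] at hr
      rw [h1, h0] at hr
      rw [cheb_two_step]
      linear_combination hr

lemma gap (hv : A.mulVec v = μ • v) :
    (cheb μ ℓ - cheb μ (ℓ - 1)) * ext ℓ v 0 = 0 := by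
  have hr := row hℓ A hA hv ⟨ℓ - 1, by omega⟩
  simp only [Fin.val_mk] at hr
  rw [if_pos trivial] at hr
  have hE : ℓ - 1 + 1 = ℓ := by omega
  rw [hE] at hr
  have e0 : ext ℓ v ℓ = 0 := dif_neg (lt_irrefl ℓ)
  rw [e0] at hr
  by_cases h2 : 2 ≤ ℓ
  · rw [if_pos (by omega)] at hr
    have ea := entries hℓ A hA hv (ℓ - 1) (by omega)
    have eb := entries hℓ A hA hv (ℓ - 1 - 1) (by omega)
    rw [ea, eb] at hr
    have hc : cheb μ ℓ = μ * cheb μ (ℓ - 1) - cheb μ (ℓ - 1 - 1) := by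
      have e1 : ℓ - 1 - 1 + 2 = ℓ := by omega
      have e2 : ℓ - 1 - 1 + 1 = ℓ - 1 := by omega
      calc cheb μ ℓ = cheb μ (ℓ - 1 - 1 + 2) := by rw [e1]
        _ = μ * cheb μ (ℓ - 1 - 1 + 1) - cheb μ (ℓ - 1 - 1) := cheb_two_step μ _
        _ = μ * cheb μ (ℓ - 1) - cheb μ (ℓ - 1 - 1) := by rw [e2]
    rw [hc]
    linear_combination -hr
  · have h1 : ℓ = 1 := by omega
    subst h1
    rw [if_neg (by omega)] at hr
    show (cheb μ 1 - cheb μ 0) * ext 1 v 0 = 0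
    show (μ - 1) * ext 1 v 0 = 0
    have : ext 1 v (1 - 1) = ext 1 v 0 := rfl
    rw [this] at hr
    linear_combination -hr

end Rows

lemma cos_odd_pi {m : ℕ} (hm : Odd m) : cos ((m : ℝ) * π) = -1 := by
  obtain ⟨j, hj⟩ := hm
  subst hj
  push_cast
  rw [show ((2 : ℝ) * j + 1) * π = (j : ℕ) * (2 * π) + π by push_cast; ring]
  exact cos_nat_mul_two_pi_add_pi j

lemma sin_reflect {m : ℕ} (hm : Odd m) (x : ℝ) : sin ((m : ℝ) * π - x) = sin x := by
  rw [sin_sub, sin_nat_mul_pi, cos_odd_pi hm]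
  ring

/-- The key characterization of the roots of `cheb μ ℓ - cheb μ (ℓ-1)`. -/
lemma root_iff (ℓ : ℕ) (hℓ : 1 ≤ ℓ) (μ : ℝ) :
    cheb μ ℓ - cheb μ (ℓ - 1) = 0 ↔
      ∃ m : ℕ, Odd m ∧ 1 ≤ m ∧ m ≤ 2 * ℓ - 1 ∧
        μ = 2 * cos (m * π / (2 * ℓ + 1)) := by
  have hcast : ((ℓ - 1 : ℕ) : ℝ) + 1 = (ℓ : ℝ) := by
    have : ((ℓ - 1 : ℕ) : ℝ) = (ℓ : ℝ) - 1 := by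
      push_cast [Nat.cast_sub hℓ]; ring
    rw [this]; ring
  constructor
  · intro h
    have habs : |μ| < 2 := by
      by_contra hc
      exact cheb_gap_ne hℓ (le_of_not_gt hc) h
    have h1 : -1 < μ / 2 := by cases abs_lt.mp habs; linarith
    have h2 : μ / 2 < 1 := by cases abs_lt.mp habs; linarith
    set θ := arccos (μ / 2) with hθdef
    have hc : cos θ = μ / 2 := cos_arccos (by linarith) (by linarith)
    have hθ0 : 0 < θ := arccos_pos.mpr h2
    have hθπ : θ < π := by
      rcases lt_or_eq_of_le (arccos_le_pi (μ / 2)) with h' | h'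
      · exact h'
      · exfalso
        have : μ / 2 = -1 := by rw [← hc, hθdef, h', cos_pi]
        linarith
    have hμ : μ = 2 * cos θ := by rw [hc]; ring
    have hs : sin θ ≠ 0 := (sin_pos_of_pos_of_lt_pi hθ0 hθπ).ne'
    have key : sin (((ℓ : ℝ) + 1) * θ) - sin ((ℓ : ℝ) * θ) = 0 := by
      have e1 := cheb_cos θ ℓ
      have e2 := cheb_cos θ (ℓ - 1)
      rw [hcast] at e2
      rw [← hμ] at e1 e2
      have := congrArg (· * sin θ) h
      simp only [sub_mul, zero_mul] at this
      rw [e1, e2] at this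
      exact this
    have prod : 2 * cos ((2 * (ℓ : ℝ) + 1) * θ / 2) * sin (θ / 2) = 0 := by
      have expand : sin (((ℓ : ℝ) + 1) * θ) - sin ((ℓ : ℝ) * θ)
          = 2 * cos ((2 * (ℓ : ℝ) + 1) * θ / 2) * sin (θ / 2) := by
        rw [show ((ℓ : ℝ) + 1) * θ = (2 * (ℓ : ℝ) + 1) * θ / 2 + θ / 2 by ring,
          show (ℓ : ℝ) * θ = (2 * (ℓ : ℝ) + 1) * θ / 2 - θ / 2 by ring, sin_add, sin_sub]
        ring
      rw [← expand]
      exact key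
    have hs2 : sin (θ / 2) ≠ 0 :=
      (sin_pos_of_pos_of_lt_pi (by linarith) (by linarith [pi_pos])).ne'
    have hcz : cos ((2 * (ℓ : ℝ) + 1) * θ / 2) = 0 := by
      rcases mul_eq_zero.mp prod with h' | h'
      · rcases mul_eq_zero.mp h' with h'' | h''
        · norm_num at h''
        · exact h''
      · exact absurd h' hs2
    obtain ⟨k, hk⟩ := cos_eq_zero_iff.mp hcz
    have hkθ : (2 * (ℓ : ℝ) + 1) * θ = (2 * (k : ℝ) + 1) * π := by
      field_simp at hk
      linarith
    have hπ := pi_pos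
    have hkpos : (0 : ℝ) < 2 * (k : ℝ) + 1 := by
      nlinarith [hkθ, mul_pos (show (0 : ℝ) < 2 * (ℓ : ℝ) + 1 by positivity) hθ0]
    have hkub : (2 * (k : ℝ) + 1) < 2 * (ℓ : ℝ) + 1 := by
      have h' : (2 * (k : ℝ) + 1) * π < (2 * (ℓ : ℝ) + 1) * π := by
        rw [← hkθ]
        exact mul_lt_mul_of_pos_left hθπ (by positivity)
      exact lt_of_mul_lt_mul_right h' hπ.le
    have hk0 : 0 ≤ k := by
      by_contra hneg
      push_neg at hneg
      have hk1 : k ≤ -1 := by omega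
      have : (k : ℝ) ≤ -1 := by exact_mod_cast hk1
      linarith
    have hkℓ : (k : ℝ) < (ℓ : ℝ) := by linarith
    have hkℓ' : k.toNat < ℓ := by
      have : (k : ℝ) < (ℓ : ℝ) := hkℓ
      have hkk : k < (ℓ : ℤ) := by exact_mod_cast this
      omega
    refine ⟨2 * k.toNat + 1, odd_two_mul_add_one _, by omega, by omega, ?_⟩
    have h5 : ((k.toNat : ℕ) : ℝ) = (k : ℝ) := by
      exact_mod_cast congrArg (Int.cast : ℤ → ℝ) (Int.toNat_of_nonneg hk0)
    have hcastk : ((2 * k.toNat + 1 : ℕ) : ℝ) = 2 * (k : ℝ) + 1 := by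
      push_cast
      rw [h5]
    have hθval : θ = ((2 * k.toNat + 1 : ℕ) : ℝ) * π / (2 * (ℓ : ℝ) + 1) := by
      rw [hcastk]
      field_simp
      linarith [hkθ]
    rw [hμ, hθval]
  · rintro ⟨m, hm, hm1, hm2, rfl⟩
    set θ := (m : ℝ) * π / (2 * (ℓ : ℝ) + 1) with hθdef
    have hπ := pi_pos
    have hden : (0 : ℝ) < 2 * (ℓ : ℝ) + 1 := by positivity
    have hm2' : (m : ℝ) < 2 * (ℓ : ℝ) + 1 := by
      have : (m : ℝ) ≤ 2 * (ℓ : ℝ) - 1 := by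
        have : (m : ℕ) ≤ 2 * ℓ - 1 := hm2
        have h2 : ((m : ℕ) : ℝ) ≤ ((2 * ℓ - 1 : ℕ) : ℝ) := by exact_mod_cast this
        have h3 : ((2 * ℓ - 1 : ℕ) : ℝ) = 2 * (ℓ : ℝ) - 1 := by
          push_cast [Nat.cast_sub (by omega : 1 ≤ 2 * ℓ)]; ring
        linarith [h3 ▸ h2]
      linarith
    have hθ0 : 0 < θ := by
      apply div_pos _ hden
      have : (1 : ℝ) ≤ (m : ℝ) := by exact_mod_cast hm1
      nlinarith
    have hθπ : θ < π := by
      rw [hθdef, div_lt_iff₀ hden]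
      nlinarith
    have hs : sin θ ≠ 0 := (sin_pos_of_pos_of_lt_pi hθ0 hθπ).ne'
    have hbd : sin (((ℓ : ℝ) + 1) * θ) = sin ((ℓ : ℝ) * θ) := by
      have : ((ℓ : ℝ) + 1) * θ = (m : ℝ) * π - (ℓ : ℝ) * θ := by
        rw [hθdef]; field_simp; ring
      rw [this, sin_reflect hm]
    have e1 := cheb_cos θ ℓ
    have e2 := cheb_cos θ (ℓ - 1)
    have hcast : ((ℓ - 1 : ℕ) : ℝ) + 1 = (ℓ : ℝ) := hcast
    rw [hcast] at e2
    have : (cheb (2 * cos θ) ℓ - cheb (2 * cos θ) (ℓ - 1)) * sin θ = 0 := by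
      rw [sub_mul, e1, e2, hbd]
      ring
    exact (mul_eq_zero.mp this).resolve_right hs

lemma three_term (θ b : ℝ) :
    sin ((b + 2) * θ) + sin (b * θ) = 2 * cos θ * sin ((b + 1) * θ) := by
  rw [show (b + 2) * θ = (b + 1) * θ + θ by ring,
    show b * θ = (b + 1) * θ - θ by ring, sin_add, sin_sub]
  ring

lemma theta_pos {ℓ m : ℕ} (hm1 : 1 ≤ m) : 0 < (m : ℝ) * π / (2 * (ℓ : ℝ) + 1) := by
  have hπ := pi_pos
  have hm : (1 : ℝ) ≤ (m : ℝ) := by exact_mod_cast hm1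
  have : (0:ℝ) ≤ (ℓ : ℝ) := Nat.cast_nonneg ℓ
  apply div_pos (by nlinarith) (by nlinarith)

lemma theta_lt_pi {ℓ m : ℕ} (hℓ : 1 ≤ ℓ) (hm2 : m ≤ 2 * ℓ - 1) :
    (m : ℝ) * π / (2 * (ℓ : ℝ) + 1) < π := by
  have hπ := pi_pos
  have hm : (m : ℝ) < 2 * (ℓ : ℝ) + 1 := by
    have h1 : m < 2 * ℓ + 1 := by omega
    have := (Nat.cast_lt (α := ℝ)).mpr h1
    push_cast at this
    linarith
  rw [div_lt_iff₀ (by positivity)]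
  nlinarith

lemma boundary {m : ℕ} (hm : Odd m) (ℓ : ℕ) :
    sin (((ℓ : ℝ) + 1) * ((m : ℝ) * π / (2 * (ℓ : ℝ) + 1)))
      = sin ((ℓ : ℝ) * ((m : ℝ) * π / (2 * (ℓ : ℝ) + 1))) := by
  have hden : (2 * (ℓ : ℝ) + 1) ≠ 0 := by positivity
  have h : ((ℓ : ℝ) + 1) * ((m : ℝ) * π / (2 * (ℓ : ℝ) + 1))
      = (m : ℝ) * π - (ℓ : ℝ) * ((m : ℝ) * π / (2 * (ℓ : ℝ) + 1)) := by
    field_simp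
    ring
  rw [h, sin_reflect hm]

lemma eigvec_entry_zero {ℓ : ℕ} (hℓ : 1 ≤ ℓ) (A : Matrix (Fin ℓ) (Fin ℓ) ℝ)
    (hA : ∀ i j : Fin ℓ, A i j =
      if ((i : ℕ) + 1 = (j : ℕ) ∨ (j : ℕ) + 1 = (i : ℕ) ∨
          ((i : ℕ) = ℓ - 1 ∧ (j : ℕ) = ℓ - 1)) then 1 else 0)
    {μ : ℝ} {v : Fin ℓ → ℝ} (hv : A.mulVec v = μ • v)
    (h00 : ext ℓ v 0 = 0) : v = 0 := by
  funext i
  have h1 := entries hℓ A hA hv (i : ℕ) i.2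
  rw [h00, mul_zero] at h1
  rw [ext_lt v i.2] at h1
  have : v i = v ⟨(i : ℕ), i.2⟩ := by rw [Fin.eta]
  rw [this, h1]
  rfl

end TadpoleAux

open TadpoleAux Real

theorem tadpole_eigenvalues
    (ℓ : ℕ) (hℓ : 1 ≤ ℓ)
    (A : Matrix (Fin ℓ) (Fin ℓ) ℝ)
    (hA : ∀ i j : Fin ℓ, A i j =
      if ((i : ℕ) + 1 = (j : ℕ) ∨ (j : ℕ) + 1 = (i : ℕ) ∨
          ((i : ℕ) = ℓ - 1 ∧ (j : ℕ) = ℓ - 1)) then 1 else 0) :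
    (∀ μ : ℝ, (∃ v : Fin ℓ → ℝ, v ≠ 0 ∧ A.mulVec v = μ • v) ↔
      ∃ m : ℕ, Odd m ∧ 1 ≤ m ∧ m ≤ 2 * ℓ - 1 ∧ μ = 2 * Real.cos (m * π / (2 * ℓ + 1))) ∧
    (Set.InjOn (fun m : ℕ => 2 * Real.cos (m * π / (2 * ℓ + 1)))
      {m : ℕ | Odd m ∧ 1 ≤ m ∧ m ≤ 2 * ℓ - 1}) ∧
    (∀ μ : ℝ, Module.finrank ℝ
      (Module.End.eigenspace (Matrix.toLin' A) μ) ≤ 1) := by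
  have h0 : 0 < ℓ := hℓ
  refine ⟨?_, ?_, ?_⟩
  · -- eigenvalue characterization
    intro μ
    constructor
    · rintro ⟨v, hv0, hv⟩
      have hgap := gap hℓ A hA hv
      have hv00 : ext ℓ v 0 ≠ 0 := fun hz => hv0 (eigvec_entry_zero hℓ A hA hv hz)
      have hroot : cheb μ ℓ - cheb μ (ℓ - 1) = 0 :=
        (mul_eq_zero.mp hgap).resolve_right hv00
      exact (root_iff ℓ hℓ μ).mp hroot
    · rintro ⟨m, hm, hm1, hm2, rfl⟩
      set θ := (m : ℝ) * π / (2 * (ℓ : ℝ) + 1) with hθdef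
      have hθ0 : 0 < θ := theta_pos hm1
      have hθπ : θ < π := theta_lt_pi hℓ hm2
      set v : Fin ℓ → ℝ := fun i => sin (((i : ℕ) + 1) * θ) with hvdef
      have hx : ∀ k (h : k < ℓ), ext ℓ v k = sin (((k : ℝ) + 1) * θ) := by
        intro k h
        rw [ext_lt v h]
      have hxℓ : ext ℓ v ℓ = 0 := dif_neg (lt_irrefl ℓ)
      have hbd := boundary hm ℓ
      refine ⟨v, ?_, ?_⟩
      · intro hz
        have := congrFun hz ⟨0, h0⟩
        simp only [hvdef, Pi.zero_apply] at this
        norm_num at this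
        exact (sin_pos_of_pos_of_lt_pi hθ0 hθπ).ne' this
      · funext i
        rw [mulVec_eq hℓ A hA v i]
        have hRHS : ((2 * cos θ) • v) i = 2 * cos θ * sin (((i : ℕ) + 1) * θ) := rfl
        rw [hRHS]
        have hiv := i.2
        by_cases hk1 : (i : ℕ) + 1 < ℓ
        · rw [hx ((i : ℕ) + 1) hk1, if_neg (show ¬((i : ℕ) = ℓ - 1) by omega)]
          by_cases hk0 : 0 < (i : ℕ)
          · rw [if_pos hk0, hx ((i : ℕ) - 1) (by omega)]
            have hc1 : (((i : ℕ) + 1 : ℕ) : ℝ) + 1 = ((i : ℕ) : ℝ) + 2 := by push_cast; ring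
            have hc2 : (((i : ℕ) - 1 : ℕ) : ℝ) + 1 = ((i : ℕ) : ℝ) := by
              push_cast [Nat.cast_sub hk0]
              ring
            rw [hc1, hc2]
            linarith [three_term θ (((i : ℕ)) : ℝ)]
          · have hk00 : (i : ℕ) = 0 := by omega
            rw [if_neg hk0]
            have := three_term θ 0
            rw [show ((0 : ℝ) + 2) = 2 by norm_num, show ((0:ℝ)) * θ = 0 by ring,
              Real.sin_zero, show ((0 : ℝ) + 1) = 1 by norm_num, one_mul] at this
            rw [hk00]
            norm_num
            linarith [this]
        · have hkℓ : (i : ℕ) = ℓ - 1 := by omega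
          rw [if_pos hkℓ, show (i : ℕ) + 1 = ℓ by omega, hxℓ]
          rw [hx (ℓ - 1) (by omega)]
          have hcℓ : (((ℓ - 1 : ℕ)) : ℝ) + 1 = (ℓ : ℝ) := by
            push_cast [Nat.cast_sub hℓ]
            ring
          rw [hcℓ]
          have h3 := three_term θ ((ℓ : ℝ) - 1)
          rw [show ((ℓ : ℝ) - 1 + 2) = (ℓ : ℝ) + 1 by ring,
            show ((ℓ : ℝ) - 1 + 1) = (ℓ : ℝ) by ring] at h3
          have hci : ((i : ℕ) : ℝ) + 1 = (ℓ : ℝ) := by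
            rw [hkℓ]
            exact hcℓ
          rw [hci]
          by_cases hk0 : 0 < (i : ℕ)
          · rw [if_pos hk0, hx ((i : ℕ) - 1) (by omega)]
            have hc2 : (((i : ℕ) - 1 : ℕ) : ℝ) + 1 = (ℓ : ℝ) - 1 := by
              push_cast [Nat.cast_sub hk0]
              rw [hkℓ]
              push_cast [Nat.cast_sub hℓ]
              ring
            rw [hc2]
            linarith [hbd, h3]
          · -- ℓ = 1
            have hℓ1 : ℓ = 1 := by omega
            rw [if_neg hk0]
            have hsin0 : sin ((ℓ : ℝ) - 1) = sin ((ℓ:ℝ) - 1) := rfl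
            have : sin (((ℓ : ℝ) - 1) * θ) = 0 := by
              rw [hℓ1]
              norm_num
            linarith [hbd, h3, this]
  · -- injectivity
    intro a ha b hb hab
    simp only [Set.mem_setOf_eq] at ha hb
    obtain ⟨-, ha1, ha2⟩ := ha
    obtain ⟨-, hb1, hb2⟩ := hb
    simp only at hab
    have hπ := pi_pos
    have hmema : (a : ℝ) * π / (2 * (ℓ : ℝ) + 1) ∈ Set.Icc 0 π :=
      ⟨le_of_lt (theta_pos ha1), le_of_lt (theta_lt_pi hℓ ha2)⟩
    have hmemb : (b : ℝ) * π / (2 * (ℓ : ℝ) + 1) ∈ Set.Icc 0 π :=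
      ⟨le_of_lt (theta_pos hb1), le_of_lt (theta_lt_pi hℓ hb2)⟩
    have hcos : cos ((a : ℝ) * π / (2 * (ℓ : ℝ) + 1))
        = cos ((b : ℝ) * π / (2 * (ℓ : ℝ) + 1)) := by linarith
    have heq := Real.injOn_cos hmema hmemb hcos
    have hden : (2 * (ℓ : ℝ) + 1) ≠ 0 := by positivity
    have h2 : (a : ℝ) * π = (b : ℝ) * π := by rwa [div_left_inj' hden] at heq
    exact_mod_cast mul_right_cancel₀ pi_ne_zero h2
  · -- simplicity
    intro μ
    set S := Module.End.eigenspace (Matrix.toLin' A) μ with hS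
    let f : S →ₗ[ℝ] ℝ := (LinearMap.proj (⟨0, h0⟩ : Fin ℓ)).comp S.subtype
    have hker : ∀ x : S, f x = 0 → x = 0 := by
      rintro ⟨w, hw⟩ hfx
      have hw' : A.mulVec w = μ • w := by
        have := Module.End.mem_eigenspace_iff.mp hw
        rwa [Matrix.toLin'_apply] at this
      have h00 : ext ℓ w 0 = 0 := by
        rw [ext_lt w h0]
        exact hfx
      have := eigvec_entry_zero hℓ A hA hw' h00
      exact Subtype.ext this
    have hinj : Function.Injective f :=
      LinearMap.ker_eq_bot.mp (LinearMap.ker_eq_bot'.mpr hker)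
    have := LinearMap.finrank_le_finrank_of_injective hinj
    simpa using this
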